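/- arXiv:0712.4322 — 3 statements merged into one kernel-verified Lean document; each statement's English description precedes it below -/
import Mathlib

section
/- Let D ≥ 1 be a natural number. The number of lattice points with all coordinates positive integers lying in the ball of radius √R, i.e. the cardinality of {n ∈ (ℤ₊)^D : n₁² + ⋯ + n_D² ≤ R}, is asymptotically equal to (1/2^D) · (π^{D/2} / Γ(D/2 + 1)) · R^{D/2} as R → ∞; that is, the ratio of the count to this expression tends to 1. -/
open Filter MeasureTheory Set ENNReal

variable {D : ℕ}

/-- The sign-pattern region. -/
def signReg (σ : Fin D → Bool) (r : ℝ) : Set (Fin D → ℝ) :=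
  {x | (∀ i, if σ i then 0 < x i else x i < 0) ∧ ∑ i, x i ^ 2 ≤ r ^ 2}

def orthReg (D : ℕ) (r : ℝ) : Set (Fin D → ℝ) :=
  {x | (∀ i, 0 ≤ x i) ∧ ∑ i, x i ^ 2 ≤ r ^ 2}

lemma measurableSet_sum_sq_le (r : ℝ) :
    MeasurableSet {x : Fin D → ℝ | ∑ i, x i ^ 2 ≤ r ^ 2} := by
  apply measurableSet_le
  · exact Finset.measurable_sum _ fun i _ => (measurable_pi_apply i).pow_const 2
  · exact measurable_const

lemma measurableSet_signReg (σ : Fin D → Bool) (r : ℝ) :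
    MeasurableSet (signReg σ r) := by
  have : signReg σ r =
      (⋂ i, {x : Fin D → ℝ | if σ i then 0 < x i else x i < 0}) ∩
        {x | ∑ i, x i ^ 2 ≤ r ^ 2} := by
    ext x; simp [signReg, Set.mem_iInter, and_comm]
  rw [this]
  refine (MeasurableSet.iInter fun i => ?_).inter (measurableSet_sum_sq_le r)
  cases hs : σ i
  · simp only [hs, Bool.false_eq_true, if_false]
    exact measurableSet_lt (measurable_pi_apply i) measurable_const
  · simp only [hs, if_true]
    exact measurableSet_lt measurable_const (measurable_pi_apply i)

lemma measurePreserving_reflect (σ : Fin D → Bool) :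
    MeasurePreserving (fun x : Fin D → ℝ => fun i => if σ i then x i else -x i)
      volume volume := by
  have : MeasurePreserving (fun x : Fin D → ℝ => fun i =>
      (fun t : ℝ => if σ i then t else -t) (x i)) volume volume := by
    rw [volume_pi]
    exact MeasureTheory.measurePreserving_pi (fun _ => (volume : Measure ℝ)) (fun _ => volume)
      (f := fun i => fun t : ℝ => if σ i then t else -t) (fun i => by
        by_cases h : σ i = true
        · simp only [if_pos h]
          exact MeasurePreserving.id _
        · simp only [if_neg h]
          exact Measure.measurePreserving_neg (volume : Measure ℝ))
  exact this

lemma volume_signReg (σ : Fin D → Bool) (r : ℝ) :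
    volume (signReg σ r) = volume (signReg (fun _ : Fin D => true) r) := by
  have h := measurePreserving_reflect σ
  rw [← h.measure_preimage (measurableSet_signReg σ r).nullMeasurableSet]
  congr 1
  ext x
  simp only [signReg, Set.mem_preimage, Set.mem_setOf_eq]
  constructor
  · rintro ⟨h1, h2⟩
    constructor
    · intro i
      have := h1 i
      by_cases hs : σ i <;> simp [hs] at this ⊢ <;> linarith
    · calc ∑ i, x i ^ 2 = ∑ i, (if σ i then x i else -x i) ^ 2 := by
            apply Finset.sum_congr rfl; intro i _; by_cases hs : σ i <;> simp [hs]
        _ ≤ r ^ 2 := h2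
  · rintro ⟨h1, h2⟩
    constructor
    · intro i
      have := h1 i
      simp at this
      by_cases hs : σ i <;> simp [hs] <;> linarith
    · calc ∑ i, (if σ i then x i else -x i) ^ 2 = ∑ i, x i ^ 2 := by
            apply Finset.sum_congr rfl; intro i _; by_cases hs : σ i <;> simp [hs]
        _ ≤ r ^ 2 := h2

lemma volume_hyperplanes : volume (⋃ i, {x : Fin D → ℝ | x i = 0}) = 0 := by
  refine measure_iUnion_null fun i => ?_
  rw [volume_pi]
  exact Measure.pi_hyperplane _ i 0

lemma volume_orthReg_eq_signReg (r : ℝ) :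
    volume (orthReg D r) = volume (signReg (fun _ : Fin D => true) r) := by
  apply le_antisymm
  · have hsub : orthReg D r ⊆ signReg (fun _ : Fin D => true) r ∪ ⋃ i, {x : Fin D → ℝ | x i = 0} := by
      intro x hx
      by_cases h : ∀ i, 0 < x i
      · exact Or.inl ⟨fun i => by simpa using h i, hx.2⟩
      · push_neg at h
        obtain ⟨i, hi⟩ := h
        exact Or.inr (Set.mem_iUnion.2 ⟨i, le_antisymm hi (hx.1 i)⟩)
    calc volume (orthReg D r) ≤ _ := measure_mono hsub
      _ ≤ volume (signReg (fun _ : Fin D => true) r) + volume (⋃ i, {x : Fin D → ℝ | x i = 0}) :=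
          measure_union_le _ _
      _ = volume (signReg (fun _ : Fin D => true) r) := by rw [volume_hyperplanes, add_zero]
  · apply measure_mono
    rintro x ⟨h1, h2⟩
    exact ⟨fun i => le_of_lt (by simpa using h1 i), h2⟩

lemma volume_ball_eq_sum (r : ℝ) (hD : 1 ≤ D) :
    volume {x : Fin D → ℝ | ∑ i, x i ^ 2 ≤ r ^ 2} =
      2 ^ D * volume (orthReg D r) := by
  classical
  have hZ := volume_hyperplanes (D := D)
  have hdisj : Pairwise (Function.onFun Disjoint (fun σ : Fin D → Bool => signReg σ r)) := by
    intro σ τ hne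
    obtain ⟨i, hi⟩ := Function.ne_iff.1 hne
    refine Set.disjoint_left.2 fun x hx hx' => ?_
    have h1 := hx.1 i
    have h2 := hx'.1 i
    rcases Bool.eq_false_or_eq_true (σ i) with h | h <;>
      rcases Bool.eq_false_or_eq_true (τ i) with h' | h' <;>
        simp [h, h'] at h1 h2 hi <;> linarith
  have hunion : volume (⋃ σ : Fin D → Bool, signReg σ r) =
      ∑ σ : Fin D → Bool, volume (signReg σ r) :=
    (measure_iUnion hdisj fun σ => measurableSet_signReg σ r).trans (tsum_fintype _)
  have hsub : {x : Fin D → ℝ | ∑ i, x i ^ 2 ≤ r ^ 2} ⊆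
      (⋃ σ : Fin D → Bool, signReg σ r) ∪ ⋃ i, {x : Fin D → ℝ | x i = 0} := by
    intro x hx
    by_cases h : ∀ i, x i ≠ 0
    · refine Or.inl (Set.mem_iUnion.2 ⟨fun i => decide (0 < x i), fun i => ?_, hx⟩)
      by_cases hi : 0 < x i <;> simp [hi]
      exact lt_of_le_of_ne (not_lt.1 hi) (h i)
    · push_neg at h
      obtain ⟨i, hi⟩ := h
      exact Or.inr (Set.mem_iUnion.2 ⟨i, hi⟩)
  have hle : volume {x : Fin D → ℝ | ∑ i, x i ^ 2 ≤ r ^ 2} ≤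
      ∑ σ : Fin D → Bool, volume (signReg σ r) := by
    calc volume {x : Fin D → ℝ | ∑ i, x i ^ 2 ≤ r ^ 2} ≤ _ := measure_mono hsub
      _ ≤ volume (⋃ σ : Fin D → Bool, signReg σ r) + _ := measure_union_le _ _
      _ = _ := by rw [hZ, add_zero, hunion]
  have hge : ∑ σ : Fin D → Bool, volume (signReg σ r) ≤
      volume {x : Fin D → ℝ | ∑ i, x i ^ 2 ≤ r ^ 2} := by
    rw [← hunion]
    exact measure_mono (Set.iUnion_subset fun σ x hx => hx.2)
  have heq : volume {x : Fin D → ℝ | ∑ i, x i ^ 2 ≤ r ^ 2} =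
      ∑ σ : Fin D → Bool, volume (signReg σ r) := le_antisymm hle hge
  rw [heq, volume_orthReg_eq_signReg]
  simp_rw [volume_signReg _ r]
  rw [Finset.sum_const, Finset.card_univ, Fintype.card_fun, Fintype.card_bool,
    Fintype.card_fin, nsmul_eq_mul]
  norm_num

lemma volume_orthReg (hD : 1 ≤ D) {r : ℝ} (hr : 0 ≤ r) :
    volume (orthReg D r) =
      ENNReal.ofReal ((1 / 2 ^ D) *
        (Real.sqrt Real.pi ^ D / Real.Gamma ((D : ℝ) / 2 + 1)) * r ^ D) := by
  have : Nonempty (Fin D) := ⟨⟨0, hD⟩⟩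
  have hball : {x : Fin D → ℝ | ∑ i, x i ^ 2 ≤ r ^ 2} =
      {x : Fin D → ℝ | (∑ i, |x i| ^ (2:ℝ)) ^ ((1:ℝ)/2) ≤ r} := by
    ext x
    have hsum : ∑ i, |x i| ^ (2:ℝ) = ∑ i, x i ^ 2 := by
      apply Finset.sum_congr rfl
      intro i _
      rw [Real.rpow_two, sq_abs]
    have hs : (0:ℝ) ≤ ∑ i, x i ^ 2 := Finset.sum_nonneg fun i _ => sq_nonneg _
    simp only [Set.mem_setOf_eq, hsum, ← Real.sqrt_eq_rpow]
    constructor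
    · intro h
      calc Real.sqrt (∑ i, x i ^ 2) ≤ Real.sqrt (r ^ 2) := Real.sqrt_le_sqrt h
        _ = r := Real.sqrt_sq hr
    · intro h
      calc ∑ i, x i ^ 2 = Real.sqrt (∑ i, x i ^ 2) ^ 2 := (Real.sq_sqrt hs).symm
        _ ≤ r ^ 2 := by
            apply pow_le_pow_left₀ (Real.sqrt_nonneg _) h _
  have hvol := MeasureTheory.volume_sum_rpow_le (Fin D) (p := 2) one_le_two r
  rw [← hball, volume_ball_eq_sum r hD] at hvol
  have h2D : ((2:ℝ≥0∞) ^ D) ≠ 0 := by positivity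
  have h2D' : ((2:ℝ≥0∞) ^ D) ≠ ∞ := ENNReal.pow_ne_top ENNReal.ofNat_ne_top
  rw [← ENNReal.mul_right_inj h2D h2D']
  rw [hvol]
  have hgam : Real.Gamma (1/2 + 1) = Real.sqrt Real.pi / 2 := by
    rw [Real.Gamma_add_one (by norm_num), Real.Gamma_one_half_eq]
    ring
  have hgpos : (0:ℝ) < Real.Gamma ((D:ℝ)/2 + 1) :=
    Real.Gamma_pos_of_pos (by positivity)
  rw [Fintype.card_fin, hgam]
  have h2 : (2:ℝ) * (Real.sqrt Real.pi / 2) = Real.sqrt Real.pi := by ring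
  rw [h2]
  rw [← ENNReal.ofReal_pow hr, ← ENNReal.ofReal_mul (by positivity)]
  have h2pow : (2:ℝ≥0∞) ^ D = ENNReal.ofReal ((2:ℝ) ^ D) := by
    rw [ENNReal.ofReal_pow (by norm_num)]
    norm_num
  rw [h2pow, ← ENNReal.ofReal_mul (by positivity)]
  congr 1
  field_simp

def cube (n : Fin D → ℕ+) : Set (Fin D → ℝ) :=
  Set.pi Set.univ fun i => Set.Ico (((n i : ℕ) : ℝ) - 1) ((n i : ℕ) : ℝ)

lemma measurableSet_cube (n : Fin D → ℕ+) : MeasurableSet (cube n) :=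
  MeasurableSet.univ_pi fun i => measurableSet_Ico

lemma volume_cube (n : Fin D → ℕ+) : volume (cube n) = 1 := by
  rw [cube, volume_pi_pi]
  simp

lemma cube_disjoint {n m : Fin D → ℕ+} (h : n ≠ m) : Disjoint (cube n) (cube m) := by
  obtain ⟨i, hi⟩ := Function.ne_iff.1 h
  refine Set.disjoint_left.2 fun x hx hx' => ?_
  have h1 := hx i (Set.mem_univ i)
  have h2 := hx' i (Set.mem_univ i)
  simp only [Set.mem_Ico] at h1 h2
  have hne : (n i : ℕ) ≠ (m i : ℕ) := fun hc => hi (PNat.coe_injective hc)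
  rcases lt_or_gt_of_ne hne with hlt | hlt
  · have : ((n i : ℕ) : ℝ) ≤ ((m i : ℕ) : ℝ) - 1 := by
      have : (n i : ℕ) + 1 ≤ (m i : ℕ) := hlt
      have := Nat.cast_le (α := ℝ) |>.2 this
      push_cast at this
      linarith
    linarith
  · have : ((m i : ℕ) : ℝ) ≤ ((n i : ℕ) : ℝ) - 1 := by
      have : (m i : ℕ) + 1 ≤ (n i : ℕ) := hlt
      have := Nat.cast_le (α := ℝ) |>.2 this
      push_cast at this
      linarith
    linarith

lemma finite_S (R : ℝ) : {n : Fin D → ℕ+ | ∑ i, ((n i : ℕ) : ℝ) ^ 2 ≤ R}.Finite := by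
  apply Set.Finite.subset (Set.Finite.pi
    (fun i : Fin D => Set.finite_Iic (⟨⌊R⌋₊ + 1, Nat.succ_pos _⟩ : ℕ+)))
  intro n hn
  simp only [Set.mem_pi, Set.mem_univ, Set.mem_Iic, forall_true_left]
  intro i
  have hterm : ((n i : ℕ) : ℝ) ^ 2 ≤ R := by
    refine le_trans (Finset.single_le_sum (f := fun j => ((n j : ℕ) : ℝ) ^ 2)
      (fun j _ => sq_nonneg _) (Finset.mem_univ i)) hn
  have h0 : 0 < (n i : ℕ) := (n i).2
  have h1 : (1:ℝ) ≤ ((n i : ℕ) : ℝ) := by exact_mod_cast h0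
  have h2 : ((n i : ℕ) : ℝ) ≤ R := le_trans (by nlinarith) hterm
  have h3 : (n i : ℕ) ≤ ⌊R⌋₊ := Nat.le_floor h2
  have h4 : (n i : ℕ) ≤ ⌊R⌋₊ + 1 := le_trans h3 (Nat.le_succ _)
  exact (PNat.coe_le_coe _ _).1 h4

noncomputable def latCount (D : ℕ) (R : ℝ) : ℕ :=
  Nat.card {n : Fin D → ℕ+ // ∑ i, ((n i : ℕ) : ℝ) ^ 2 ≤ R}

lemma latCount_eq (R : ℝ) : latCount D R = (finite_S (D := D) R).toFinset.card := by
  rw [latCount]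
  exact (Nat.card_coe_set_eq _).trans (Set.ncard_eq_toFinset_card _ (finite_S R))

lemma volume_union_cubes (R : ℝ) :
    volume (⋃ n ∈ (finite_S (D := D) R).toFinset, cube n) = (latCount D R : ℝ≥0∞) := by
  rw [measure_biUnion_finset (fun n _ m _ hnm => cube_disjoint hnm)
    (fun n _ => measurableSet_cube n)]
  simp [volume_cube, latCount_eq]

lemma union_cubes_subset (R : ℝ) (hR : 0 ≤ R) :
    (⋃ n ∈ (finite_S (D := D) R).toFinset, cube n) ⊆ orthReg D (Real.sqrt R) := by
  intro x hx
  simp only [Set.mem_iUnion] at hx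
  obtain ⟨n, hn, hxn⟩ := hx
  rw [Set.Finite.mem_toFinset] at hn
  have hx0 : ∀ i, 0 ≤ x i := fun i => by
    have h := (hxn i (Set.mem_univ i)).1
    have h1 : (1:ℝ) ≤ ((n i : ℕ):ℝ) := by exact_mod_cast (n i).2
    linarith
  refine ⟨hx0, ?_⟩
  rw [Real.sq_sqrt hR]
  refine le_trans (Finset.sum_le_sum fun i _ => ?_) hn
  exact pow_le_pow_left₀ (hx0 i) (le_of_lt (hxn i (Set.mem_univ i)).2) 2

lemma orth_subset_union_cubes (R : ℝ) (hR : 0 ≤ R)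
    (hDR : Real.sqrt D ≤ Real.sqrt R) :
    orthReg D (Real.sqrt R - Real.sqrt D) ⊆
      ⋃ n ∈ (finite_S (D := D) R).toFinset, cube n := by
  rintro x ⟨hx0, hxs⟩
  set n : Fin D → ℕ+ := fun i => ⟨⌊x i⌋₊ + 1, Nat.succ_pos _⟩ with hn
  have hcoe : ∀ i, ((n i : ℕ):ℝ) = (⌊x i⌋₊ : ℝ) + 1 := fun i => by
    simp [hn]
  have hmem : ∀ i, x i ∈ Set.Ico (((n i : ℕ):ℝ) - 1) ((n i : ℕ):ℝ) := by
    intro i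
    rw [hcoe i]
    constructor
    · simpa using Nat.floor_le (hx0 i)
    · simpa using Nat.lt_floor_add_one (x i)
  have hS : n ∈ {m : Fin D → ℕ+ | ∑ i, ((m i : ℕ):ℝ)^2 ≤ R} := by
    have hbound : ∀ i, ((n i : ℕ):ℝ) ≤ x i + 1 := fun i => by
      rw [hcoe i]
      have := Nat.floor_le (hx0 i)
      linarith
    set s := ∑ i, x i ^ 2 with hs
    have hs0 : 0 ≤ s := Finset.sum_nonneg fun i _ => sq_nonneg _
    have hCS : (∑ i, x i) ^ 2 ≤ (D : ℝ) * s := by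
      have := sq_sum_le_card_mul_sum_sq (s := Finset.univ) (f := x)
      simpa [hs] using this
    have hsum0 : 0 ≤ ∑ i, x i := Finset.sum_nonneg fun i _ => hx0 i
    have hsx : ∑ i, x i ≤ Real.sqrt D * Real.sqrt s := by
      rw [← Real.sqrt_mul (Nat.cast_nonneg D)]
      exact (Real.le_sqrt hsum0 (by positivity)).2 hCS
    have hsqrt : Real.sqrt s ≤ Real.sqrt R - Real.sqrt D := by
      have h1 : Real.sqrt s ≤ Real.sqrt ((Real.sqrt R - Real.sqrt D)^2) :=
        Real.sqrt_le_sqrt hxs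
      rwa [Real.sqrt_sq (by linarith)] at h1
    show ∑ i, ((n i : ℕ):ℝ)^2 ≤ R
    calc ∑ i, ((n i:ℕ):ℝ)^2 ≤ ∑ i, (x i + 1)^2 :=
          Finset.sum_le_sum fun i _ => pow_le_pow_left₀ (by positivity) (hbound i) 2
      _ = s + 2 * (∑ i, x i) + D := by
          simp only [hs, add_sq, one_pow, mul_one, Finset.sum_add_distrib,
            Finset.sum_const, Finset.card_univ, Fintype.card_fin, nsmul_eq_mul,
            mul_one, ← Finset.mul_sum]
      _ ≤ s + 2 * (Real.sqrt D * Real.sqrt s) + D := by linarith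
      _ = (Real.sqrt s + Real.sqrt D)^2 := by
          rw [add_sq, Real.sq_sqrt hs0, Real.sq_sqrt (Nat.cast_nonneg D)]
          ring
      _ ≤ (Real.sqrt R)^2 := pow_le_pow_left₀ (by positivity) (by linarith) 2
      _ = R := Real.sq_sqrt hR
  exact Set.mem_biUnion ((finite_S R).mem_toFinset.2 hS) fun i _ => hmem i

lemma latCount_bounds (hD : 1 ≤ D) {R : ℝ} (hR : (D:ℝ) ≤ R) :
    (1 / 2 ^ D) * (Real.sqrt Real.pi ^ D / Real.Gamma ((D : ℝ) / 2 + 1)) *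
        (Real.sqrt R - Real.sqrt D) ^ D ≤ (latCount D R : ℝ) ∧
      (latCount D R : ℝ) ≤
        (1 / 2 ^ D) * (Real.sqrt Real.pi ^ D / Real.Gamma ((D : ℝ) / 2 + 1)) *
          Real.sqrt R ^ D := by
  have hR0 : (0:ℝ) ≤ R := le_trans (by positivity) hR
  have hDR : Real.sqrt D ≤ Real.sqrt R := Real.sqrt_le_sqrt hR
  have hgpos : (0:ℝ) < Real.Gamma ((D:ℝ)/2 + 1) := Real.Gamma_pos_of_pos (by positivity)
  have hfin : (latCount D R : ℝ≥0∞) ≠ ∞ := ENNReal.natCast_ne_top _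
  constructor
  · have h1 : ENNReal.ofReal ((1 / 2 ^ D) *
        (Real.sqrt Real.pi ^ D / Real.Gamma ((D : ℝ) / 2 + 1)) *
        (Real.sqrt R - Real.sqrt D) ^ D) ≤ (latCount D R : ℝ≥0∞) := by
      rw [← volume_orthReg hD (by linarith), ← volume_union_cubes (D := D) R]
      exact measure_mono (orth_subset_union_cubes R hR0 hDR)
    have := (ENNReal.ofReal_le_iff_le_toReal hfin).1 h1
    simpa using this
  · have h2 : (latCount D R : ℝ≥0∞) ≤ ENNReal.ofReal ((1 / 2 ^ D) *
        (Real.sqrt Real.pi ^ D / Real.Gamma ((D : ℝ) / 2 + 1)) *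
        Real.sqrt R ^ D) := by
      rw [← volume_orthReg hD (Real.sqrt_nonneg R), ← volume_union_cubes (D := D) R]
      exact measure_mono (union_cubes_subset R hR0)
    have := (ENNReal.le_ofReal_iff_toReal_le hfin (by positivity)).1 h2
    simpa using this

/-- Weyl's law in lattice-counting form: the number of points of `(ℤ₊)^D` in the
ball of radius `√R` is asymptotic to `(1/2^D) · (π^{D/2}/Γ(D/2+1)) · R^{D/2}`. -/
theorem weyl_lattice_count (D : ℕ) (hD : 1 ≤ D) :
    Tendsto (fun R : ℝ =>
      (Nat.card {n : Fin D → ℕ+ // ∑ i, ((n i : ℕ) : ℝ) ^ 2 ≤ R} : ℝ) /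
        ((1 / 2 ^ D) * (Real.pi ^ ((D : ℝ) / 2) / Real.Gamma ((D : ℝ) / 2 + 1)) *
          R ^ ((D : ℝ) / 2)))
      atTop (nhds 1) := by
  have hgpos : (0:ℝ) < Real.Gamma ((D:ℝ)/2 + 1) := Real.Gamma_pos_of_pos (by positivity)
  have hspos : (0:ℝ) < Real.sqrt Real.pi := Real.sqrt_pos.2 Real.pi_pos
  have hpi : Real.pi ^ ((D : ℝ) / 2) = Real.sqrt Real.pi ^ D := by
    rw [Real.sqrt_eq_rpow, ← Real.rpow_natCast (Real.pi ^ ((1:ℝ)/2)) D,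
      ← Real.rpow_mul Real.pi_pos.le]
    congr 1
    ring
  have hcpos : (0:ℝ) < (1 / 2 ^ D) * (Real.sqrt Real.pi ^ D / Real.Gamma ((D : ℝ) / 2 + 1)) := by
    positivity
  have hsqrtT : Tendsto Real.sqrt atTop atTop := by
    have h : Real.sqrt = fun x : ℝ => x ^ ((1:ℝ)/2) := funext Real.sqrt_eq_rpow
    rw [h]
    exact tendsto_rpow_atTop one_half_pos
  have hg : Tendsto (fun R : ℝ => (1 - Real.sqrt D / Real.sqrt R) ^ D) atTop (nhds 1) := by
    have h0 : Tendsto (fun R : ℝ => Real.sqrt D / Real.sqrt R) atTop (nhds 0) :=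
      tendsto_const_nhds.div_atTop hsqrtT
    have h1 : Tendsto (fun R : ℝ => 1 - Real.sqrt D / Real.sqrt R) atTop (nhds (1 - 0)) :=
      tendsto_const_nhds.sub h0
    rw [sub_zero] at h1
    have h2 := h1.pow D
    rwa [one_pow] at h2
  refine tendsto_of_tendsto_of_tendsto_of_le_of_le' hg tendsto_const_nhds ?_ ?_
  · -- lower bound eventually
    filter_upwards [eventually_ge_atTop (max (D:ℝ) 1)] with R hRm
    have hRD : (D:ℝ) ≤ R := le_trans (le_max_left _ _) hRm
    have hR1 : (1:ℝ) ≤ R := le_trans (le_max_right _ _) hRm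
    have hR0 : (0:ℝ) < R := by linarith
    have hsR : (0:ℝ) < Real.sqrt R := Real.sqrt_pos.2 hR0
    obtain ⟨hlow, _⟩ := latCount_bounds hD hRD
    have hrpow : R ^ ((D:ℝ)/2) = Real.sqrt R ^ D := by
      rw [Real.sqrt_eq_rpow, ← Real.rpow_natCast (R ^ ((1:ℝ)/2)) D,
        ← Real.rpow_mul hR0.le]
      congr 1
      ring
    have hcount : (Nat.card {n : Fin D → ℕ+ // ∑ i, ((n i : ℕ) : ℝ) ^ 2 ≤ R} : ℝ)
        = (latCount D R : ℝ) := rfl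
    have hfrac : (1 - Real.sqrt D / Real.sqrt R)
        = (Real.sqrt R - Real.sqrt D) / Real.sqrt R := by
      field_simp
    have key : (1 - Real.sqrt D / Real.sqrt R) ^ D =
        ((1 / 2 ^ D) * (Real.sqrt Real.pi ^ D / Real.Gamma ((D : ℝ) / 2 + 1)) *
            (Real.sqrt R - Real.sqrt D) ^ D) /
          ((1 / 2 ^ D) * (Real.sqrt Real.pi ^ D / Real.Gamma ((D : ℝ) / 2 + 1)) *
            Real.sqrt R ^ D) := by
      rw [hfrac, div_pow, mul_div_mul_left _ _ (ne_of_gt hcpos)]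
    rw [hpi, hrpow, hcount, key]
    gcongr
  · -- upper bound eventually
    filter_upwards [eventually_ge_atTop (max (D:ℝ) 1)] with R hRm
    have hRD : (D:ℝ) ≤ R := le_trans (le_max_left _ _) hRm
    have hR1 : (1:ℝ) ≤ R := le_trans (le_max_right _ _) hRm
    have hR0 : (0:ℝ) < R := by linarith
    have hsR : (0:ℝ) < Real.sqrt R := Real.sqrt_pos.2 hR0
    obtain ⟨_, hhigh⟩ := latCount_bounds hD hRD
    have hrpow : R ^ ((D:ℝ)/2) = Real.sqrt R ^ D := by
      rw [Real.sqrt_eq_rpow, ← Real.rpow_natCast (R ^ ((1:ℝ)/2)) D,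
        ← Real.rpow_mul hR0.le]
      congr 1
      ring
    have hcount : (Nat.card {n : Fin D → ℕ+ // ∑ i, ((n i : ℕ) : ℝ) ^ 2 ≤ R} : ℝ)
        = (latCount D R : ℝ) := rfl
    rw [hpi, hrpow, hcount, div_le_one (by positivity)]
    exact hhigh
end

section
/- Fix a dimension D ≥ 1, real constants ℏ > 0, m > 0, L > 0, a half-integer spin s ≥ 0, and set V = L^D. Define the level counting function N(E) = (2s+1) · #{n ∈ (ℤ₊)^D : (ℏ²π²/(2mL²))(n₁² + ⋯ + n_D²) ≤ E}. Then N(E) is asymptotically equal to (2s+1) · C_D · V · E^{D/2} as E → ∞, where C_D = (1/Γ(D/2+1)) · (m/(2πℏ²))^{D/2}; that is, N(E) / ((2s+1) C_D V E^{D/2}) → 1 as E → ∞. -/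
open Filter
open MeasureTheory Real
open scoped ENNReal

-- volume of Euclidean ball expressed in pi space
lemma ball_vol (D : ℕ) (hD : 1 ≤ D) (r : ℝ) (hr : 0 ≤ r) :
    volume {x : Fin D → ℝ | ∑ i, x i ^ 2 ≤ r ^ 2} =
      ENNReal.ofReal (Real.sqrt π ^ D / Real.Gamma ((D : ℝ) / 2 + 1) * r ^ D) := by
  haveI : Nonempty (Fin D) := Fin.pos_iff_nonempty.mp hD
  have h := MeasureTheory.volume_sum_rpow_le (ι := Fin D) (p := 2) one_le_two r
  have hset : {x : Fin D → ℝ | (∑ i, |x i| ^ (2:ℝ)) ^ (1/(2:ℝ)) ≤ r}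
      = {x : Fin D → ℝ | ∑ i, x i ^ 2 ≤ r ^ 2} := by
    ext x
    simp only [Set.mem_setOf_eq, Real.rpow_two, sq_abs]
    rw [← Real.sqrt_eq_rpow]
    exact Real.sqrt_le_left hr
  rw [hset] at h
  rw [h]
  have hg : 2 * Real.Gamma (1/2 + 1) = Real.sqrt π := by
    rw [Real.Gamma_add_one (by norm_num), Real.Gamma_one_half_eq]
    ring
  rw [Fintype.card_fin, hg]
  rw [ENNReal.ofReal_mul (by positivity), ← ENNReal.ofReal_pow hr]
  ring

lemma hyper_null (D : ℕ) (i : Fin D) : volume {x : Fin D → ℝ | x i = 0} = 0 := by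
  have : {x : Fin D → ℝ | x i = 0} = Set.pi Set.univ (fun j => if j = i then ({0} : Set ℝ) else Set.univ) := by
    ext x
    simp only [Set.mem_setOf_eq, Set.mem_pi, Set.mem_univ, forall_true_left]
    constructor
    · intro h j; by_cases hj : j = i <;> simp [hj, h]
    · intro h; have := h i; simpa using this
  rw [this, volume_pi_pi]
  refine Finset.prod_eq_zero (Finset.mem_univ i) ?_
  simp

lemma refl_mp (D : ℕ) (ε : Fin D → Bool) :
    MeasurePreserving (fun x : Fin D → ℝ => fun i => if ε i then x i else -x i)
      volume volume := by
  have := MeasureTheory.measurePreserving_pi (fun _ : Fin D => (volume : Measure ℝ))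
    (fun _ => volume) (f := fun i (t : ℝ) => if ε i then t else -t) (fun i => ?_)
  · exact this
  · by_cases h : ε i
    · simp only [h, if_true]; exact MeasurePreserving.id _
    · simp only [h, if_false]
      exact Measure.measurePreserving_neg _

-- sandwiched sets have the orthant volume
lemma vol_sandwich (D : ℕ) (t : ℝ) (A : Set (Fin D → ℝ))
    (h1 : {x : Fin D → ℝ | (∀ i, 0 < x i) ∧ ∑ i, x i ^ 2 ≤ t} ⊆ A)
    (h2 : A ⊆ {x : Fin D → ℝ | (∀ i, 0 ≤ x i) ∧ ∑ i, x i ^ 2 ≤ t}) :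
    volume A = volume {x : Fin D → ℝ | (∀ i, 0 ≤ x i) ∧ ∑ i, x i ^ 2 ≤ t} := by
  refine le_antisymm (measure_mono h2) ?_
  have hsub : {x : Fin D → ℝ | (∀ i, 0 ≤ x i) ∧ ∑ i, x i ^ 2 ≤ t} ⊆
      A ∪ ⋃ i, {x : Fin D → ℝ | x i = 0} := by
    intro x hx
    by_cases hx' : ∀ i, 0 < x i
    · exact Or.inl (h1 ⟨hx', hx.2⟩)
    · push_neg at hx'
      obtain ⟨i, hi⟩ := hx'
      exact Or.inr (Set.mem_iUnion.mpr ⟨i, le_antisymm hi (hx.1 i)⟩)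
  calc volume {x : Fin D → ℝ | (∀ i, 0 ≤ x i) ∧ ∑ i, x i ^ 2 ≤ t}
      ≤ volume A + volume (⋃ i, {x : Fin D → ℝ | x i = 0}) :=
        le_trans (measure_mono hsub) (measure_union_le _ _)
    _ = volume A := by
        rw [measure_iUnion_null (fun i => hyper_null D i), add_zero]

lemma vol_orthant (D : ℕ) (hD : 1 ≤ D) (t : ℝ) :
    (2 : ℝ≥0∞) ^ D * volume {x : Fin D → ℝ | (∀ i, 0 ≤ x i) ∧ ∑ i, x i ^ 2 ≤ t}
      = volume {x : Fin D → ℝ | ∑ i, x i ^ 2 ≤ t} := by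
  classical
  set B := {x : Fin D → ℝ | ∑ i, x i ^ 2 ≤ t} with hB
  have hBm : MeasurableSet B := by
    apply measurableSet_le _ measurable_const
    exact Finset.measurable_sum _ (fun i _ => (measurable_pi_apply i).pow_const 2)
  set Q : (Fin D → Bool) → Set (Fin D → ℝ) :=
    fun ε => {x | ∀ i, if ε i then 0 ≤ x i else x i < 0} with hQ
  have hQm : ∀ ε, MeasurableSet (Q ε) := by
    intro ε
    have : Q ε = ⋂ i, {x : Fin D → ℝ | if ε i then 0 ≤ x i else x i < 0} := by
      ext x; simp [hQ, Set.mem_iInter]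
    rw [this]
    refine MeasurableSet.iInter (fun i => ?_)
    by_cases h : ε i
    · simp only [h, if_true]
      exact measurableSet_le measurable_const (measurable_pi_apply i)
    · simp only [h, if_false]
      exact measurableSet_lt (measurable_pi_apply i) measurable_const
  have hcover : B = ⋃ ε, B ∩ Q ε := by
    ext x
    simp only [Set.mem_iUnion, Set.mem_inter_iff]
    constructor
    · intro hx
      refine ⟨fun i => decide (0 ≤ x i), hx, fun i => ?_⟩
      by_cases h : 0 ≤ x i <;> simp [h, lt_of_not_ge, h]
    · rintro ⟨ε, hx, -⟩; exact hx
  have hdisj : Pairwise (Function.onFun Disjoint fun ε => B ∩ Q ε) := by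
    intro ε ε' hne
    refine Set.disjoint_left.mpr ?_
    rintro x ⟨-, hx⟩ ⟨-, hx'⟩
    apply hne
    funext i
    have h1 := hx i; have h2 := hx' i
    by_cases hε : ε i <;> by_cases hε' : ε' i
    · rw [hε, hε']
    · rw [if_pos hε] at h1; rw [if_neg hε'] at h2; linarith
    · rw [if_neg hε] at h1; rw [if_pos hε'] at h2; linarith
    · rw [Bool.eq_false_iff.mpr hε, Bool.eq_false_iff.mpr hε']
  -- each piece has the orthant volume
  have hpiece : ∀ ε, volume (B ∩ Q ε) =
      volume {x : Fin D → ℝ | (∀ i, 0 ≤ x i) ∧ ∑ i, x i ^ 2 ≤ t} := by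
    intro ε
    have hmp := refl_mp D ε
    rw [← hmp.measure_preimage ((hBm.inter (hQm ε)).nullMeasurableSet)]
    apply vol_sandwich
    · rintro x ⟨hx1, hx2⟩
      constructor
      · simp only [hB, Set.mem_setOf_eq]
        calc ∑ i, (if ε i then x i else -x i) ^ 2 = ∑ i, x i ^ 2 := by
              refine Finset.sum_congr rfl (fun i _ => ?_)
              by_cases h : ε i <;> simp [h, neg_sq]
          _ ≤ t := hx2
      · intro i
        by_cases h : ε i <;> simp [hQ, h, (hx1 i).le, neg_neg, hx1 i]
    · rintro x ⟨hx1, hx2⟩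
      refine ⟨fun i => ?_, ?_⟩
      · have h2 := hx2 i
        by_cases h : ε i
        · rw [if_pos h] at h2; simpa [h] using h2
        · rw [if_neg h] at h2; simp only [if_neg h] at h2; simpa using h2.le
      · have : ∑ i, (if ε i then x i else -x i) ^ 2 = ∑ i, x i ^ 2 := by
          refine Finset.sum_congr rfl (fun i _ => ?_)
          by_cases h : ε i <;> simp [h, neg_sq]
        simpa [hB, this] using hx1
  have hsum : volume B = ∑ ε : Fin D → Bool, volume (B ∩ Q ε) := by
    conv_lhs => rw [hcover]
    rw [measure_iUnion hdisj (fun ε => hBm.inter (hQm ε)), tsum_fintype]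
  rw [hsum, Finset.sum_congr rfl (fun ε _ => hpiece ε), Finset.sum_const]
  simp [Fintype.card_fun, mul_comm]

-- the unit cube attached to a lattice point
def wcube (D : ℕ) (n : Fin D → ℕ+) : Set (Fin D → ℝ) :=
  Set.pi Set.univ fun i => Set.Ioc ((n i : ℝ) - 1) (n i)

lemma wcube_volume (D : ℕ) (n : Fin D → ℕ+) : volume (wcube D n) = 1 := by
  rw [wcube, volume_pi_pi]
  simp [Real.volume_Ioc]

lemma wcube_disjoint (D : ℕ) : Pairwise (Function.onFun Disjoint (wcube D)) := by
  intro n n' hne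
  refine Set.disjoint_left.mpr ?_
  intro x hx hx'
  apply hne
  funext i
  have h1 := hx i (Set.mem_univ i)
  have h2 := hx' i (Set.mem_univ i)
  simp only [Set.mem_Ioc] at h1 h2
  have : ((n i : ℕ) : ℝ) = ((n' i : ℕ) : ℝ) := by
    rcases lt_trichotomy ((n i : ℕ) : ℝ) ((n' i : ℕ) : ℝ) with h | h | h
    · exfalso
      have : ((n i : ℕ) : ℝ) + 1 ≤ ((n' i : ℕ) : ℝ) := by exact_mod_cast Nat.cast_lt.mp h
      linarith
    · exact h
    · exfalso
      have : ((n' i : ℕ) : ℝ) + 1 ≤ ((n i : ℕ) : ℝ) := by exact_mod_cast Nat.cast_lt.mp h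
      linarith
  exact PNat.coe_injective (Nat.cast_injective this)

lemma lattice_finite (D : ℕ) (t : ℝ) :
    {n : Fin D → ℕ+ | ∑ i, ((n i : ℕ) : ℝ) ^ 2 ≤ t}.Finite := by
  apply Set.Finite.subset
    (Set.Finite.pi (fun i : Fin D => Set.finite_Iic (⟨⌈t⌉₊ + 1, Nat.succ_pos _⟩ : ℕ+)))
  intro n hn
  have hn : ∑ i, ((n i : ℕ) : ℝ) ^ 2 ≤ t := hn
  refine Set.mem_pi.mpr (fun i _ => Set.mem_Iic.mpr ?_)
  have h1 : ((n i : ℕ) : ℝ) ^ 2 ≤ t := by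
    refine le_trans ?_ hn
    exact Finset.single_le_sum (f := fun j => ((n j : ℕ) : ℝ) ^ 2)
      (fun j _ => by positivity) (Finset.mem_univ i)
  have h2 : ((n i : ℕ) : ℝ) ≤ ((n i : ℕ) : ℝ) ^ 2 := by
    have : (1 : ℝ) ≤ ((n i : ℕ) : ℝ) := by exact_mod_cast (n i).property
    nlinarith
  have : ((n i : ℕ) : ℝ) ≤ t := le_trans h2 h1
  have : (n i : ℕ) ≤ ⌈t⌉₊ := by
    exact_mod_cast le_trans this (Nat.le_ceil t)
  have hlt : (n i : ℕ) < ⌈t⌉₊ + 1 := lt_of_le_of_lt this (Nat.lt_succ_self _)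
  exact le_of_lt hlt

lemma wcube_measurable (D : ℕ) (n : Fin D → ℕ+) : MeasurableSet (wcube D n) :=
  MeasurableSet.univ_pi (fun i => measurableSet_Ioc)

lemma count_upper (D : ℕ) (r : ℝ) (hr : 0 ≤ r) :
    (((lattice_finite D (r ^ 2)).toFinset.card : ℝ≥0∞)) ≤
      volume {x : Fin D → ℝ | (∀ i, 0 ≤ x i) ∧ ∑ i, x i ^ 2 ≤ r ^ 2} := by
  classical
  set T := (lattice_finite D (r ^ 2)).toFinset with hT
  have hsub : (⋃ n ∈ T, wcube D n) ⊆ {x : Fin D → ℝ | (∀ i, 0 ≤ x i) ∧ ∑ i, x i ^ 2 ≤ r ^ 2} := by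
    intro x hx
    obtain ⟨n, hn, hxn⟩ := Set.mem_iUnion₂.mp hx
    have hnT : ∑ i, ((n i : ℕ) : ℝ) ^ 2 ≤ r ^ 2 := by
      have := (Set.Finite.mem_toFinset _).mp hn
      exact this
    have hbound : ∀ i, 0 ≤ x i ∧ x i ≤ ((n i : ℕ) : ℝ) := by
      intro i
      have h := hxn i (Set.mem_univ i)
      simp only [Set.mem_Ioc] at h
      have h1 : (1 : ℝ) ≤ ((n i : ℕ) : ℝ) := by exact_mod_cast (n i).property
      exact ⟨by linarith [h.1], h.2⟩
    refine ⟨fun i => (hbound i).1, le_trans ?_ hnT⟩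
    exact Finset.sum_le_sum fun i _ =>
      pow_le_pow_left₀ (hbound i).1 (hbound i).2 2
  calc ((T.card : ℝ≥0∞)) = ∑ n ∈ T, volume (wcube D n) := by
        simp [wcube_volume]
    _ = volume (⋃ n ∈ T, wcube D n) := by
        rw [measure_biUnion_finset ?_ (fun n _ => wcube_measurable D n)]
        intro n hn n' hn' hne
        exact wcube_disjoint D hne
    _ ≤ _ := measure_mono hsub

lemma count_lower (D : ℕ) (r : ℝ) (hr : Real.sqrt D ≤ r) :
    volume {x : Fin D → ℝ | (∀ i, 0 ≤ x i) ∧ ∑ i, x i ^ 2 ≤ (r - Real.sqrt D) ^ 2}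
      ≤ ((lattice_finite D (r ^ 2)).toFinset.card : ℝ≥0∞) := by
  classical
  set T := (lattice_finite D (r ^ 2)).toFinset with hT
  have key : {x : Fin D → ℝ | (∀ i, 0 < x i) ∧ ∑ i, x i ^ 2 ≤ (r - Real.sqrt D) ^ 2}
      ⊆ ⋃ n ∈ T, wcube D n := by
    rintro x ⟨hx1, hx2⟩
    set n : Fin D → ℕ+ := fun i => ⟨⌈x i⌉₊, Nat.ceil_pos.mpr (hx1 i)⟩ with hn
    have hcube : x ∈ wcube D n := by
      intro i _
      simp only [Set.mem_Ioc, hn, PNat.mk_coe]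
      constructor
      · have := Nat.ceil_lt_add_one (le_of_lt (hx1 i))
        linarith
      · exact Nat.le_ceil _
    have hup : ∀ i, ((n i : ℕ) : ℝ) ≤ x i + 1 := by
      intro i
      have := Nat.ceil_lt_add_one (le_of_lt (hx1 i))
      exact le_of_lt this
    have hmem : n ∈ T := by
      rw [hT, Set.Finite.mem_toFinset]
      show ∑ i, ((n i : ℕ) : ℝ) ^ 2 ≤ r ^ 2
      have h1 : ∑ i, ((n i : ℕ) : ℝ) ^ 2 ≤ ∑ i, (x i + 1) ^ 2 := by
        refine Finset.sum_le_sum fun i _ => ?_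
        have := hup i
        have h0 : (0:ℝ) ≤ ((n i : ℕ) : ℝ) := by positivity
        nlinarith [hx1 i]
      have hexp : ∑ i, (x i + 1) ^ 2 = (∑ i, x i ^ 2) + 2 * (∑ i, x i) + D := by
        simp_rw [add_sq, one_pow, mul_one]
        rw [Finset.sum_add_distrib, Finset.sum_add_distrib, Finset.sum_const,
          Finset.card_univ, Fintype.card_fin, ← Finset.mul_sum, nsmul_eq_mul, mul_one]
      have hcs : (∑ i, x i) ^ 2 ≤ (D : ℝ) * ∑ i, x i ^ 2 := by
        have := sq_sum_le_card_mul_sum_sq (s := (Finset.univ : Finset (Fin D))) (f := x)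
        simpa [Finset.card_univ, Fintype.card_fin] using this
      have hS1 : (0:ℝ) ≤ ∑ i, x i := Finset.sum_nonneg fun i _ => (hx1 i).le
      have hS2 : (0:ℝ) ≤ ∑ i, x i ^ 2 := Finset.sum_nonneg fun i _ => sq_nonneg _
      have hd : (0:ℝ) ≤ Real.sqrt D := Real.sqrt_nonneg _
      have hd2 : Real.sqrt D ^ 2 = (D : ℝ) := Real.sq_sqrt (Nat.cast_nonneg D)
      have hu : (0:ℝ) ≤ r - Real.sqrt D := by linarith
      have hS1le : ∑ i, x i ≤ Real.sqrt D * (r - Real.sqrt D) := by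
        nlinarith [hx2, hcs, hS1, hS2, hd, hd2, hu, mul_nonneg hd hu]
      calc ∑ i, ((n i : ℕ) : ℝ) ^ 2 ≤ ∑ i, (x i + 1) ^ 2 := h1
        _ = (∑ i, x i ^ 2) + 2 * (∑ i, x i) + D := hexp
        _ ≤ r ^ 2 := by nlinarith [hx2, hS1le, hd2, hu, hd]
    exact Set.mem_iUnion₂.mpr ⟨n, hmem, hcube⟩
  calc volume {x : Fin D → ℝ | (∀ i, 0 ≤ x i) ∧ ∑ i, x i ^ 2 ≤ (r - Real.sqrt D) ^ 2}
      = volume {x : Fin D → ℝ | (∀ i, 0 < x i) ∧ ∑ i, x i ^ 2 ≤ (r - Real.sqrt D) ^ 2} := by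
        refine (vol_sandwich D _ _ (fun x hx => hx) ?_).symm
        rintro x ⟨h1, h2⟩
        exact ⟨fun i => (h1 i).le, h2⟩
    _ ≤ volume (⋃ n ∈ T, wcube D n) := measure_mono key
    _ ≤ ∑ n ∈ T, volume (wcube D n) := measure_biUnion_finset_le T _
    _ = T.card := by simp [wcube_volume]

noncomputable def wκ (D : ℕ) : ℝ :=
  Real.sqrt π ^ D / Real.Gamma ((D : ℝ) / 2 + 1) / 2 ^ D

lemma wκ_pos (D : ℕ) : 0 < wκ D := by
  have hΓ : 0 < Real.Gamma ((D : ℝ) / 2 + 1) :=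
    Real.Gamma_pos_of_pos (by positivity)
  have hπ : 0 < Real.sqrt π := Real.sqrt_pos.mpr Real.pi_pos
  rw [wκ]; positivity

noncomputable def wF (D : ℕ) (t : ℝ) : ℕ := (lattice_finite D t).toFinset.card

lemma vol_S (D : ℕ) (hD : 1 ≤ D) (ρ : ℝ) (hρ : 0 ≤ ρ) :
    volume {x : Fin D → ℝ | (∀ i, 0 ≤ x i) ∧ ∑ i, x i ^ 2 ≤ ρ ^ 2}
      = ENNReal.ofReal (wκ D * ρ ^ D) := by
  have hΓ : 0 < Real.Gamma ((D : ℝ) / 2 + 1) :=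
    Real.Gamma_pos_of_pos (by positivity)
  have h := vol_orthant D hD (ρ ^ 2)
  rw [ball_vol D hD ρ hρ] at h
  have h2 : (2 : ℝ≥0∞) ^ D = ENNReal.ofReal ((2:ℝ) ^ D) := by
    rw [ENNReal.ofReal_pow (by norm_num)]
    norm_num
  have := (ENNReal.eq_div_iff (a := (2 : ℝ≥0∞) ^ D)
    (pow_ne_zero D two_ne_zero) (ENNReal.pow_ne_top ENNReal.ofNat_ne_top)).mpr h
  rw [this, h2, ← ENNReal.ofReal_div_of_pos (by positivity)]
  congr 1
  rw [wκ]
  ring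

lemma wF_le (D : ℕ) (hD : 1 ≤ D) (r : ℝ) (hr : 0 ≤ r) :
    (wF D (r ^ 2) : ℝ) ≤ wκ D * r ^ D := by
  have h := count_upper D r hr
  rw [vol_S D hD r hr] at h
  have h' : ENNReal.ofReal ((wF D (r ^ 2) : ℝ)) ≤ ENNReal.ofReal (wκ D * r ^ D) := by
    rwa [ENNReal.ofReal_natCast]
  exact (ENNReal.ofReal_le_ofReal_iff (mul_nonneg (wκ_pos D).le (pow_nonneg hr D))).mp h'

lemma le_wF (D : ℕ) (hD : 1 ≤ D) (r : ℝ) (hr : Real.sqrt D ≤ r) :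
    wκ D * (r - Real.sqrt D) ^ D ≤ (wF D (r ^ 2) : ℝ) := by
  have h := count_lower D r hr
  rw [vol_S D hD (r - Real.sqrt D) (by linarith)] at h
  have h' : ENNReal.ofReal (wκ D * (r - Real.sqrt D) ^ D)
      ≤ ENNReal.ofReal ((wF D (r ^ 2) : ℝ)) := by
    rwa [ENNReal.ofReal_natCast]
  exact (ENNReal.ofReal_le_ofReal_iff (Nat.cast_nonneg _)).mp h'

lemma wF_tendsto (D : ℕ) (hD : 1 ≤ D) :
    Tendsto (fun r : ℝ => (wF D (r ^ 2) : ℝ) / (wκ D * r ^ D)) atTop (nhds 1) := by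
  have hκ := wκ_pos D
  have hlow : Tendsto (fun r : ℝ => ((r - Real.sqrt D) / r) ^ D) atTop (nhds 1) := by
    have h1 : Tendsto (fun r : ℝ => (r - Real.sqrt D) / r) atTop (nhds 1) := by
      have h2 : Tendsto (fun r : ℝ => 1 - Real.sqrt D / r) atTop (nhds 1) := by
        have := (tendsto_const_nhds (x := Real.sqrt D) (f := atTop (α := ℝ))).div_atTop
          tendsto_id
        simpa using (tendsto_const_nhds (x := (1:ℝ)) (f := atTop (α := ℝ))).sub this
      refine h2.congr' ?_
      filter_upwards [eventually_gt_atTop 0] with r hr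
      field_simp
    have := h1.pow D
    simpa using this
  apply tendsto_of_tendsto_of_tendsto_of_le_of_le' hlow tendsto_const_nhds
  · filter_upwards [eventually_ge_atTop (max (Real.sqrt D) 1)] with r hr
    have hr1 : Real.sqrt D ≤ r := le_trans (le_max_left _ _) hr
    have hr0 : (0:ℝ) < r := lt_of_lt_of_le one_pos (le_trans (le_max_right _ _) hr)
    have h := le_wF D hD r hr1
    have hpos : 0 < wκ D * r ^ D := by positivity
    calc ((r - Real.sqrt D) / r) ^ D
        = (wκ D * (r - Real.sqrt D) ^ D) / (wκ D * r ^ D) := by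
          rw [mul_div_mul_left _ _ (ne_of_gt hκ), div_pow]
      _ ≤ (wF D (r ^ 2) : ℝ) / (wκ D * r ^ D) := by gcongr
  · filter_upwards [eventually_ge_atTop (max (Real.sqrt D) 1)] with r hr
    have hr1 : Real.sqrt D ≤ r := le_trans (le_max_left _ _) hr
    have hr0 : (0:ℝ) ≤ r := le_trans zero_le_one (le_trans (le_max_right _ _) hr)
    have h := wF_le D hD r hr0
    have hpos : 0 < wκ D * r ^ D := by
      have : (0:ℝ) < r := lt_of_lt_of_le one_pos (le_trans (le_max_right _ _) hr)
      positivity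
    exact (div_le_one hpos).mpr h

lemma const_id (D : ℕ) (ℏ m L : ℝ) (hℏ : 0 < ℏ) (hm : 0 < m) (hL : 0 < L) :
    wκ D = (1 / Real.Gamma ((D : ℝ) / 2 + 1) * (m / (2 * π * ℏ ^ 2)) ^ ((D : ℝ) / 2))
      * L ^ D * (ℏ ^ 2 * π ^ 2 / (2 * m * L ^ 2)) ^ ((D : ℝ) / 2) := by
  have hπ := Real.pi_pos
  have hΓ : 0 < Real.Gamma ((D : ℝ) / 2 + 1) := Real.Gamma_pos_of_pos (by positivity)
  have hb : (0:ℝ) ≤ Real.sqrt π / (2 * L) := by positivity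
  have key : (m / (2 * π * ℏ ^ 2)) * (ℏ ^ 2 * π ^ 2 / (2 * m * L ^ 2))
      = (Real.sqrt π / (2 * L)) ^ 2 := by
    rw [div_pow, Real.sq_sqrt hπ.le]
    field_simp
  have hmul : (m / (2 * π * ℏ ^ 2)) ^ ((D : ℝ) / 2)
        * (ℏ ^ 2 * π ^ 2 / (2 * m * L ^ 2)) ^ ((D : ℝ) / 2)
      = (Real.sqrt π / (2 * L)) ^ D := by
    rw [← Real.mul_rpow (by positivity) (by positivity), key,
      ← Real.rpow_natCast (Real.sqrt π / (2 * L)) 2, ← Real.rpow_mul hb,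
      ← Real.rpow_natCast (Real.sqrt π / (2 * L)) D]
    congr 1
    push_cast
    ring
  have expand : (Real.sqrt π / (2 * L)) ^ D = Real.sqrt π ^ D / (2 ^ D * L ^ D) := by
    rw [div_pow, mul_pow]
  calc wκ D = Real.sqrt π ^ D / Real.Gamma ((D : ℝ) / 2 + 1) / 2 ^ D := rfl
    _ = (1 / Real.Gamma ((D : ℝ) / 2 + 1)) * L ^ D
          * (Real.sqrt π ^ D / (2 ^ D * L ^ D)) := by
        field_simp
    _ = _ := by rw [← expand, ← hmul]; ring

/-- Weyl's law for a free spin-`s` particle of mass `m` in a `D`-dimensional cube of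
side `L` with Dirichlet boundary conditions: the level counting function
`N(E) = (2s+1) · #{n ∈ (ℤ₊)^D : (ℏ²π²/(2mL²)) Σ nᵢ² ≤ E}` satisfies
`N(E) / ((2s+1) C_D V E^{D/2}) → 1` as `E → ∞`, with
`C_D = Γ(D/2+1)⁻¹ (m/(2πℏ²))^{D/2}` and `V = L^D`. -/
theorem weyl_law_box (D : ℕ) (hD : 1 ≤ D) (ℏ m L : ℝ) (hℏ : 0 < ℏ) (hm : 0 < m)
    (hL : 0 < L) (s : ℝ) (hs : 0 ≤ s) (hs' : ∃ k : ℕ, s = (k : ℝ) / 2) :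
    Tendsto (fun E : ℝ =>
      ((2 * s + 1) * (Nat.card {n : Fin D → ℕ+ //
          ℏ ^ 2 * Real.pi ^ 2 / (2 * m * L ^ 2) * ∑ i, ((n i : ℕ) : ℝ) ^ 2 ≤ E} : ℝ)) /
        ((2 * s + 1) *
          (1 / Real.Gamma ((D : ℝ) / 2 + 1) * (m / (2 * Real.pi * ℏ ^ 2)) ^ ((D : ℝ) / 2)) *
          L ^ D * E ^ ((D : ℝ) / 2)))
      atTop (nhds 1) := by
  have hπ := Real.pi_pos
  set c : ℝ := ℏ ^ 2 * Real.pi ^ 2 / (2 * m * L ^ 2) with hc_def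
  have hc : 0 < c := by positivity
  have hs1 : (0:ℝ) < 2 * s + 1 := by linarith
  -- the rescaled radius tends to infinity
  have hrE : Tendsto (fun E : ℝ => Real.sqrt (E / c)) atTop atTop := by
    have h1 : Tendsto (fun E : ℝ => E / c) atTop atTop :=
      Tendsto.atTop_div_const hc tendsto_id
    have h2 : Tendsto Real.sqrt atTop atTop := by
      refine (tendsto_rpow_atTop (y := (1:ℝ)/2) (by norm_num)).congr' ?_
      filter_upwards [eventually_ge_atTop (0:ℝ)] with x hx
      exact (Real.sqrt_eq_rpow x).symm
    exact h2.comp h1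
  have hmain := (wF_tendsto D hD).comp hrE
  refine hmain.congr' ?_
  filter_upwards [eventually_gt_atTop (0:ℝ)] with E hE
  have hEc : 0 < E / c := div_pos hE hc
  have hr2 : Real.sqrt (E / c) ^ 2 = E / c := Real.sq_sqrt hEc.le
  -- identify the counting function
  have hcard : (Nat.card {n : Fin D → ℕ+ //
      ℏ ^ 2 * Real.pi ^ 2 / (2 * m * L ^ 2) * ∑ i, ((n i : ℕ) : ℝ) ^ 2 ≤ E} : ℝ)
      = (wF D (Real.sqrt (E / c) ^ 2) : ℝ) := by
    congr 1
    rw [hr2]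
    have : Nat.card {n : Fin D → ℕ+ //
        ℏ ^ 2 * Real.pi ^ 2 / (2 * m * L ^ 2) * ∑ i, ((n i : ℕ) : ℝ) ^ 2 ≤ E}
        = Nat.card {n : Fin D → ℕ+ // ∑ i, ((n i : ℕ) : ℝ) ^ 2 ≤ E / c} := by
      refine Nat.card_congr (Equiv.subtypeEquivRight fun n => ?_)
      rw [← hc_def, mul_comm, ← le_div_iff₀ hc]
    rw [this, wF]
    have h2 : Nat.card {n : Fin D → ℕ+ // ∑ i, ((n i : ℕ) : ℝ) ^ 2 ≤ E / c} =
        Nat.card ↥{n : Fin D → ℕ+ | ∑ i, ((n i : ℕ) : ℝ) ^ 2 ≤ E / c} := rfl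
    rw [h2, Nat.card_coe_set_eq,
      Set.ncard_eq_toFinset_card _ (lattice_finite D (E / c))]
  -- identify the denominator
  have hrD : Real.sqrt (E / c) ^ D = (E / c) ^ ((D : ℝ) / 2) := by
    rw [← Real.rpow_natCast (Real.sqrt (E / c)) D, Real.sqrt_eq_rpow,
      ← Real.rpow_mul hEc.le]
    congr 1
    ring
  have hdenom : (2 * s + 1) *
        (1 / Real.Gamma ((D : ℝ) / 2 + 1) * (m / (2 * Real.pi * ℏ ^ 2)) ^ ((D : ℝ) / 2)) *
        L ^ D * E ^ ((D : ℝ) / 2)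
      = (2 * s + 1) * (wκ D * Real.sqrt (E / c) ^ D) := by
    rw [hrD, Real.div_rpow hE.le hc.le, const_id D ℏ m L hℏ hm hL]
    have hcpow : (0:ℝ) < c ^ ((D : ℝ) / 2) := Real.rpow_pos_of_pos hc _
    field_simp
    rw [hc_def]
    ring
  rw [← hc_def] at hcard
  simp only [Function.comp_apply, hcard, hdenom]
  rw [mul_div_mul_left _ _ (ne_of_gt hs1)]
end

section
/- The special linear group SL(2, ℤ[i]) over the Gaussian integers is generated by the three matrices [[1, 1], [0, 1]], [[1, i], [0, 1]], and [[0, −1], [1, 0]]; that is, the subgroup of SL(2, ℤ[i]) generated (closed) by these three matrices is the whole group. -/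
open Matrix

abbrev SL2I := Matrix.SpecialLinearGroup (Fin 2) GaussianInt

def Tm (z : GaussianInt) : SL2I := ⟨!![1, z; 0, 1], by simp [Matrix.det_fin_two_of]⟩
def Lm (z : GaussianInt) : SL2I := ⟨!![1, 0; z, 1], by simp [Matrix.det_fin_two_of]⟩

lemma Tm_mul (a b : GaussianInt) : Tm a * Tm b = Tm (a + b) := by
  apply Subtype.ext
  simp only [Matrix.SpecialLinearGroup.coe_mul]
  simp [Tm, Matrix.SpecialLinearGroup.coe_mul, Matrix.mul_fin_two, add_comm]

lemma Tm_zero : Tm 0 = 1 := by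
  apply Subtype.ext
  simp [Tm, Matrix.SpecialLinearGroup.coe_one]
  exact (Matrix.eta_fin_two 1).symm.trans (by norm_num)

lemma Tm_inv (a : GaussianInt) : (Tm a)⁻¹ = Tm (-a) := by
  apply inv_eq_of_mul_eq_one_right
  rw [Tm_mul]; simp [Tm_zero]

lemma Tm_pow (a : GaussianInt) (n : ℕ) : Tm a ^ n = Tm (n * a) := by
  induction n with
  | zero => simp [Tm_zero]
  | succ k ih => rw [pow_succ, ih, Tm_mul, Nat.cast_succ]; ring_nf

lemma Tm_zpow (a : GaussianInt) (n : ℤ) : Tm a ^ n = Tm (n * a) := by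
  cases n with
  | ofNat k => simpa using Tm_pow a k
  | negSucc k =>
      rw [zpow_negSucc, Tm_pow, Tm_inv]
      norm_num
      ring_nf

/-- `SL(2, ℤ[i])` is generated by the matrices `[[1,1],[0,1]]`, `[[1,i],[0,1]]`,
and `[[0,−1],[1,0]]`, where `i = √(−1)` is the imaginary unit of the Gaussian
integers. -/
theorem SL2_GaussianInt_generators (A B C : Matrix.SpecialLinearGroup (Fin 2) GaussianInt)
    (hA : (A : Matrix (Fin 2) (Fin 2) GaussianInt) = !![1, 1; 0, 1])
    (hB : (B : Matrix (Fin 2) (Fin 2) GaussianInt) = !![1, Zsqrtd.sqrtd; 0, 1])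
    (hC : (C : Matrix (Fin 2) (Fin 2) GaussianInt) = !![0, -1; 1, 0]) :
    Subgroup.closure {A, B, C} = ⊤ := by
  set H := Subgroup.closure {A, B, C} with hH
  have hAH : A ∈ H := Subgroup.subset_closure (by simp)
  have hBH : B ∈ H := Subgroup.subset_closure (by simp)
  have hCH : C ∈ H := Subgroup.subset_closure (by simp)
  have hA' : A = Tm 1 := Subtype.ext (by rw [hA]; rfl)
  have hB' : B = Tm Zsqrtd.sqrtd := Subtype.ext (by rw [hB]; rfl)
  -- all translations are in H
  have hT : ∀ z : GaussianInt, Tm z ∈ H := by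
    intro z
    have hz : z = (z.re : GaussianInt) + (z.im : GaussianInt) * Zsqrtd.sqrtd := by
      ext <;> simp
    have : Tm z = A ^ (z.re) * B ^ (z.im) := by
      rw [hA', hB', Tm_zpow, Tm_zpow, Tm_mul, mul_one]
      exact congrArg Tm hz
    rw [this]
    exact H.mul_mem (H.zpow_mem hAH _) (H.zpow_mem hBH _)
  -- lower triangular elementary matrices
  have hL : ∀ z : GaussianInt, Lm z ∈ H := by
    intro z
    have key : Lm z * C = C * Tm (-z) := by
      apply Subtype.ext
      simp only [Matrix.SpecialLinearGroup.coe_mul]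
      simp [Lm, Tm, Matrix.SpecialLinearGroup.coe_mul, hC, Matrix.mul_fin_two]
    have : Lm z = C * Tm (-z) * C⁻¹ := by
      rw [← key]; group
    rw [this]
    exact H.mul_mem (H.mul_mem hCH (hT _)) (H.inv_mem hCH)
  -- main induction on the norm of the lower-left entry
  have main : ∀ n : ℕ, ∀ g : SL2I,
      ((g : Matrix (Fin 2) (Fin 2) GaussianInt) 1 0).norm.natAbs = n → g ∈ H := by
    intro n
    induction n using Nat.strong_induction_on with
    | _ n ih =>
      intro g hn
      set a := (g : Matrix (Fin 2) (Fin 2) GaussianInt) 0 0 with ha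
      set b := (g : Matrix (Fin 2) (Fin 2) GaussianInt) 0 1 with hb
      set c := (g : Matrix (Fin 2) (Fin 2) GaussianInt) 1 0 with hcc
      set d := (g : Matrix (Fin 2) (Fin 2) GaussianInt) 1 1 with hd
      have hg : (g : Matrix (Fin 2) (Fin 2) GaussianInt) = !![a, b; c, d] :=
        Matrix.eta_fin_two _
      by_cases hc0 : c = 0
      · -- upper triangular case
        have hdet : a * d - b * c = 1 := by
          have := g.prop
          rwa [Matrix.det_fin_two] at this
        have had : a * d = 1 := by rw [hc0] at hdet; simpa using hdet
        have key : g * Tm (-(d * b)) * C = Tm (-a) * Lm d * Tm (-a) := by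
          apply Subtype.ext
          simp only [Matrix.SpecialLinearGroup.coe_mul]
          simp only [Matrix.SpecialLinearGroup.coe_mul, hg, hC, Tm, Lm, hc0,
            Matrix.mul_fin_two]
          refine Matrix.ext fun i j => ?_
          fin_cases i <;> fin_cases j <;>
            simp only [Matrix.cons_val', Matrix.cons_val_zero, Matrix.cons_val_one,
              Matrix.head_cons, Matrix.empty_val', Matrix.cons_val_fin_one,
              Matrix.head_fin_const, Matrix.of_apply, Fin.isValue, Fin.mk_zero, Fin.mk_one,
              Matrix.cons_val_zero, Matrix.cons_val_one] <;>
            first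
            | ring1
            | linear_combination (1 - b) * had
            | linear_combination (-a) * had
            | linear_combination had
        have hgeq : g = (Tm (-a) * Lm d * Tm (-a)) * C⁻¹ * (Tm (-(d * b)))⁻¹ := by
          rw [← key]; group
        rw [Tm_inv, neg_neg] at hgeq
        rw [hgeq]
        exact H.mul_mem (H.mul_mem (H.mul_mem (H.mul_mem (hT _) (hL _)) (hT _))
          (H.inv_mem hCH)) (hT _)
      · -- euclidean step
        set q : GaussianInt := a / c with hq
        have h10 : ((C * (Tm (-q) * g) : SL2I) : Matrix (Fin 2) (Fin 2) GaussianInt) 1 0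
            = a % c := by
          rw [EuclideanDomain.mod_eq_sub_mul_div]
          simp only [Matrix.SpecialLinearGroup.coe_mul]
          simp [Matrix.SpecialLinearGroup.coe_mul, hg, hC, Tm, Matrix.mul_fin_two]
          ring
        have hlt : ((a % c)).norm.natAbs < n := by
          rw [← hn]
          exact GaussianInt.natAbs_norm_mod_lt a hc0
        have hmem : C * (Tm (-q) * g) ∈ H := ih _ hlt _ (by rw [h10])
        have : g = (Tm (-q))⁻¹ * (C⁻¹ * (C * (Tm (-q) * g))) := by group
        rw [this]
        exact H.mul_mem (H.inv_mem (hT _)) (H.mul_mem (H.inv_mem hCH) hmem)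
  rw [eq_top_iff]
  intro g _
  exact main _ g rfl
end
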